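/- Let Z₁ and Z₂ be independent standard normal random variables, let m₁, m₂, a, b ∈ ℝ and σ > 0, and set X₁ = m₁ + σ Z₁ and X₂ = m₂ + a Z₁ + b Z₂ (so that Cov(X₁, X₂) = σa). Let φ : ℝ → ℝ be locally integrable and define g(x) = g(0) + ∫₀ˣ φ(t) dt. Assume that g(X₁), g(X₁)·X₂ and φ(X₁) are integrable. Then E[g(X₁)(X₂ − m₂)] = σ a · E[φ(X₁)], i.e. Cov(g(X₁), X₂) = Cov(X₁, X₂) · E[φ(X₁)]. -/

import Mathlib

open MeasureTheory ProbabilityTheory Real Set Filter Topology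

namespace SteinAux

noncomputable def rho (z : ℝ) : ℝ := Real.exp (-(z ^ 2) / 2)

lemma rho_pos (z : ℝ) : 0 < rho z := Real.exp_pos _

lemma rho_cont : Continuous rho := by unfold rho; fun_prop

lemma hasDerivAt_neg_rho (z : ℝ) : HasDerivAt (fun z => -rho z) (z * rho z) z := by
  have h : HasDerivAt (fun z : ℝ => -(z ^ 2) / 2) (-z) z := by
    have := ((hasDerivAt_pow 2 z).neg).div_const 2
    refine this.congr_deriv ?_
    push_cast; ring
  have h2 := (h.exp).neg
  refine h2.congr_deriv ?_
  unfold rho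
  ring

lemma integrable_mul_rho : Integrable (fun z => z * rho z) := by
  have h := integrable_mul_exp_neg_mul_sq (b := (1:ℝ)/2) (by norm_num)
  refine h.congr (Eventually.of_forall fun z => ?_)
  unfold rho
  ring_nf

lemma tendsto_sq_atBot : Tendsto (fun z : ℝ => z ^ 2) atBot atTop := by
  have h1 : Tendsto (fun z : ℝ => z ^ 2) atTop atTop := tendsto_pow_atTop two_ne_zero
  have := h1.comp tendsto_neg_atBot_atTop
  convert this using 2 with z
  simp [Function.comp, neg_sq]

lemma tendsto_rho_atTop : Tendsto rho atTop (𝓝 0) := by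
  have h1 : Tendsto (fun z : ℝ => -(z ^ 2) / 2) atTop atBot := by
    apply Tendsto.atBot_div_const (by norm_num : (0:ℝ) < 2)
    exact tendsto_neg_atTop_atBot.comp (tendsto_pow_atTop two_ne_zero)
  exact Real.tendsto_exp_atBot.comp h1

lemma tendsto_rho_atBot : Tendsto rho atBot (𝓝 0) := by
  have h1 : Tendsto (fun z : ℝ => -(z ^ 2) / 2) atBot atBot := by
    apply Tendsto.atBot_div_const (by norm_num : (0:ℝ) < 2)
    exact tendsto_neg_atTop_atBot.comp tendsto_sq_atBot
  exact Real.tendsto_exp_atBot.comp h1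

lemma fact_Ioi (t : ℝ) : ∫ z in Ioi t, z * rho z = rho t := by
  have := integral_Ioi_of_hasDerivAt_of_tendsto' (a := t) (m := 0)
    (f := fun z => -rho z) (f' := fun z => z * rho z)
    (fun x _ => hasDerivAt_neg_rho x) (integrable_mul_rho.integrableOn)
    (by simpa using tendsto_rho_atTop.neg)
  simpa using this

lemma fact_Iic (t : ℝ) : ∫ z in Iic t, z * rho z = -rho t := by
  have := integral_Iic_of_hasDerivAt_of_tendsto' (a := t) (m := 0)
    (f := fun z => -rho z) (f' := fun z => z * rho z)
    (fun x _ => hasDerivAt_neg_rho x) (integrable_mul_rho.integrableOn)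
    (by simpa using tendsto_rho_atBot.neg)
  simpa using this

lemma fact_total : ∫ z, z * rho z = 0 := by
  rw [← integral_add_compl (measurableSet_Iic (a := (0:ℝ))) integrable_mul_rho,
    compl_Iic, fact_Iic, fact_Ioi]
  ring

section Core

variable (ψ : ℝ → ℝ)

/-- kernel for the positive region `0 < t ≤ z`. -/
noncomputable def kpos (z t : ℝ) : ℝ := (Set.Ioc 0 z).indicator ψ t * (z * rho z)

/-- kernel for the negative region `z < t ≤ 0`. -/
noncomputable def kneg (z t : ℝ) : ℝ := (Set.Ioc z 0).indicator ψ t * (z * rho z)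

lemma uncurry_kpos : Function.uncurry (kpos ψ) =
    Set.indicator {p : ℝ × ℝ | 0 < p.2 ∧ p.2 ≤ p.1} (fun p => ψ p.2 * (p.1 * rho p.1)) := by
  funext p
  rcases p with ⟨z, t⟩
  simp only [Function.uncurry, kpos, Set.indicator, Set.mem_Ioc, Set.mem_setOf_eq]
  by_cases h : 0 < t ∧ t ≤ z <;> simp [h]

lemma uncurry_kneg : Function.uncurry (kneg ψ) =
    Set.indicator {p : ℝ × ℝ | p.1 < p.2 ∧ p.2 ≤ 0} (fun p => ψ p.2 * (p.1 * rho p.1)) := by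
  funext p
  rcases p with ⟨z, t⟩
  simp only [Function.uncurry, kneg, Set.indicator, Set.mem_Ioc, Set.mem_setOf_eq]
  by_cases h : z < t ∧ t ≤ 0 <;> simp [h]

lemma measurableSet_pos_region : MeasurableSet {p : ℝ × ℝ | 0 < p.2 ∧ p.2 ≤ p.1} :=
  (measurableSet_lt measurable_const measurable_snd).inter
    (measurableSet_le measurable_snd measurable_fst)

lemma measurableSet_neg_region : MeasurableSet {p : ℝ × ℝ | p.1 < p.2 ∧ p.2 ≤ 0} :=
  (measurableSet_lt measurable_fst measurable_snd).inter
    (measurableSet_le measurable_snd measurable_const)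

variable {ψ}

lemma aesm_F (hψm : AEStronglyMeasurable ψ (volume : Measure ℝ)) :
    AEStronglyMeasurable (fun p : ℝ × ℝ => ψ p.2 * (p.1 * rho p.1))
      ((volume : Measure ℝ).prod (volume : Measure ℝ)) := by
  exact (hψm.comp_snd).mul
    ((measurable_fst.mul (rho_cont.measurable.comp measurable_fst)).aestronglyMeasurable)

lemma integrable_abs_psi_rho (hint : Integrable (fun t => ψ t * rho t)) :
    Integrable (fun t => ‖ψ t‖ * rho t) := by
  refine hint.norm.congr (Eventually.of_forall fun t => ?_)
  show ‖ψ t * rho t‖ = ‖ψ t‖ * rho t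
  rw [norm_mul, Real.norm_of_nonneg (rho_pos t).le]

lemma integrable_kpos (hψm : AEStronglyMeasurable ψ (volume : Measure ℝ))
    (hint : Integrable (fun t => ψ t * rho t)) :
    Integrable (Function.uncurry (kpos ψ)) ((volume : Measure ℝ).prod volume) := by
  rw [uncurry_kpos]
  rw [integrable_prod_iff' ((aesm_F hψm).indicator measurableSet_pos_region)]
  constructor
  · refine Eventually.of_forall fun t => ?_
    by_cases ht : 0 < t
    · have heq : (fun z => Set.indicator {p : ℝ × ℝ | 0 < p.2 ∧ p.2 ≤ p.1}
          (fun p => ψ p.2 * (p.1 * rho p.1)) (z, t))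
          = Set.indicator (Set.Ici t) (fun z => ψ t * (z * rho z)) := by
        funext z
        simp only [Set.indicator, Set.mem_setOf_eq, Set.mem_Ici, ht, true_and]
      rw [heq]
      exact (integrable_mul_rho.const_mul (ψ t)).indicator measurableSet_Ici
    · have heq : (fun z => Set.indicator {p : ℝ × ℝ | 0 < p.2 ∧ p.2 ≤ p.1}
          (fun p => ψ p.2 * (p.1 * rho p.1)) (z, t)) = fun _ => 0 := by
        funext z
        simp only [Set.indicator, Set.mem_setOf_eq, ht, false_and, if_false]
      rw [heq]
      exact integrable_zero _ _ _
  · have heq : (fun t => ∫ z, ‖Set.indicator {p : ℝ × ℝ | 0 < p.2 ∧ p.2 ≤ p.1}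
        (fun p => ψ p.2 * (p.1 * rho p.1)) (z, t)‖)
        = Set.indicator (Set.Ioi 0) (fun t => ‖ψ t‖ * rho t) := by
      funext t
      by_cases ht : 0 < t
      · have h1 : (fun z => ‖Set.indicator {p : ℝ × ℝ | 0 < p.2 ∧ p.2 ≤ p.1}
            (fun p => ψ p.2 * (p.1 * rho p.1)) (z, t)‖)
            = Set.indicator (Set.Ici t) (fun z => ‖ψ t * (z * rho z)‖) := by
          funext z
          simp only [Set.indicator, Set.mem_setOf_eq, Set.mem_Ici, ht, true_and]
          split_ifs <;> simp
        rw [h1, integral_indicator measurableSet_Ici]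
        have h2 : ∫ z in Set.Ici t, ‖ψ t * (z * rho z)‖
            = ∫ z in Set.Ici t, ‖ψ t‖ * (z * rho z) := by
          refine setIntegral_congr_fun measurableSet_Ici fun z hz => ?_
          have hz0 : 0 ≤ z * rho z := mul_nonneg (le_trans ht.le hz) (rho_pos z).le
          rw [norm_mul, Real.norm_of_nonneg hz0]
        rw [h2, integral_const_mul, integral_Ici_eq_integral_Ioi, fact_Ioi,
          Set.indicator_of_mem (Set.mem_Ioi.mpr ht)]
      · have h1 : (fun z => ‖Set.indicator {p : ℝ × ℝ | 0 < p.2 ∧ p.2 ≤ p.1}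
            (fun p => ψ p.2 * (p.1 * rho p.1)) (z, t)‖) = fun _ => 0 := by
          funext z
          simp only [Set.indicator, Set.mem_setOf_eq, ht, false_and, if_false, norm_zero]
        rw [h1, Set.indicator_of_notMem (fun h => ht (Set.mem_Ioi.mp h))]
        simp
    rw [heq]
    exact (integrable_abs_psi_rho hint).indicator measurableSet_Ioi

lemma integrable_kneg (hψm : AEStronglyMeasurable ψ (volume : Measure ℝ))
    (hint : Integrable (fun t => ψ t * rho t)) :
    Integrable (Function.uncurry (kneg ψ)) ((volume : Measure ℝ).prod volume) := by
  rw [uncurry_kneg]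
  rw [integrable_prod_iff' ((aesm_F hψm).indicator measurableSet_neg_region)]
  constructor
  · refine Eventually.of_forall fun t => ?_
    by_cases ht : t ≤ 0
    · have heq : (fun z => Set.indicator {p : ℝ × ℝ | p.1 < p.2 ∧ p.2 ≤ 0}
          (fun p => ψ p.2 * (p.1 * rho p.1)) (z, t))
          = Set.indicator (Set.Iio t) (fun z => ψ t * (z * rho z)) := by
        funext z
        simp only [Set.indicator, Set.mem_setOf_eq, Set.mem_Iio, ht, and_true]
      rw [heq]
      exact (integrable_mul_rho.const_mul (ψ t)).indicator measurableSet_Iio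
    · have heq : (fun z => Set.indicator {p : ℝ × ℝ | p.1 < p.2 ∧ p.2 ≤ 0}
          (fun p => ψ p.2 * (p.1 * rho p.1)) (z, t)) = fun _ => 0 := by
        funext z
        simp only [Set.indicator, Set.mem_setOf_eq, ht, and_false, if_false]
      rw [heq]
      exact integrable_zero _ _ _
  · have heq : (fun t => ∫ z, ‖Set.indicator {p : ℝ × ℝ | p.1 < p.2 ∧ p.2 ≤ 0}
        (fun p => ψ p.2 * (p.1 * rho p.1)) (z, t)‖)
        = Set.indicator (Set.Iic 0) (fun t => ‖ψ t‖ * rho t) := by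
      funext t
      by_cases ht : t ≤ 0
      · have h1 : (fun z => ‖Set.indicator {p : ℝ × ℝ | p.1 < p.2 ∧ p.2 ≤ 0}
            (fun p => ψ p.2 * (p.1 * rho p.1)) (z, t)‖)
            = Set.indicator (Set.Iio t) (fun z => ‖ψ t * (z * rho z)‖) := by
          funext z
          simp only [Set.indicator, Set.mem_setOf_eq, Set.mem_Iio, ht, and_true]
          split_ifs <;> simp
        rw [h1, integral_indicator measurableSet_Iio]
        have h2 : ∫ z in Set.Iio t, ‖ψ t * (z * rho z)‖
            = ∫ z in Set.Iio t, ‖ψ t‖ * (-(z * rho z)) := by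
          refine setIntegral_congr_fun measurableSet_Iio fun z hz => ?_
          have hz0 : z * rho z ≤ 0 :=
            mul_nonpos_of_nonpos_of_nonneg (le_of_lt (lt_of_lt_of_le hz ht)) (rho_pos z).le
          rw [norm_mul, Real.norm_of_nonpos hz0]
        rw [h2]
        simp only [mul_neg]
        rw [integral_neg, integral_const_mul, ← integral_Iic_eq_integral_Iio, fact_Iic,
          Set.indicator_of_mem (Set.mem_Iic.mpr ht)]
        ring
      · have h1 : (fun z => ‖Set.indicator {p : ℝ × ℝ | p.1 < p.2 ∧ p.2 ≤ 0}
            (fun p => ψ p.2 * (p.1 * rho p.1)) (z, t)‖) = fun _ => 0 := by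
          funext z
          simp only [Set.indicator, Set.mem_setOf_eq, ht, and_false, if_false, norm_zero]
        rw [h1, Set.indicator_of_notMem (fun h => ht (Set.mem_Iic.mp h))]
        simp
    rw [heq]
    exact (integrable_abs_psi_rho hint).indicator measurableSet_Iic

end Core

section CoreSwap

variable {ψ : ℝ → ℝ}

lemma kpos_int_t (z : ℝ) : ∫ t, kpos ψ z t = (∫ t in Set.Ioc 0 z, ψ t) * (z * rho z) := by
  unfold kpos
  rw [integral_mul_const, integral_indicator measurableSet_Ioc]

lemma kneg_int_t (z : ℝ) : ∫ t, kneg ψ z t = (∫ t in Set.Ioc z 0, ψ t) * (z * rho z) := by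
  unfold kneg
  rw [integral_mul_const, integral_indicator measurableSet_Ioc]

lemma kpos_int_z (t : ℝ) :
    ∫ z, kpos ψ z t = Set.indicator (Set.Ioi 0) (fun t => ψ t * rho t) t := by
  by_cases ht : 0 < t
  · have heq : (fun z => kpos ψ z t)
        = Set.indicator (Set.Ici t) (fun z => ψ t * (z * rho z)) := by
      funext z
      simp only [kpos, Set.indicator, Set.mem_Ioc, Set.mem_Ici, ht, true_and]
      split_ifs <;> simp
    rw [heq, integral_indicator measurableSet_Ici, integral_const_mul,
      integral_Ici_eq_integral_Ioi, fact_Ioi, Set.indicator_of_mem (Set.mem_Ioi.mpr ht)]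
  · have heq : (fun z => kpos ψ z t) = fun _ => 0 := by
      funext z
      simp only [kpos, Set.indicator, Set.mem_Ioc]
      have : ¬(0 < t ∧ t ≤ z) := fun h => ht h.1
      simp [this]
    rw [heq, Set.indicator_of_notMem (fun h => ht (Set.mem_Ioi.mp h))]
    simp

lemma kneg_int_z (t : ℝ) :
    ∫ z, kneg ψ z t = Set.indicator (Set.Iic 0) (fun t => -(ψ t * rho t)) t := by
  by_cases ht : t ≤ 0
  · have heq : (fun z => kneg ψ z t)
        = Set.indicator (Set.Iio t) (fun z => ψ t * (z * rho z)) := by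
      funext z
      simp only [kneg, Set.indicator, Set.mem_Ioc, Set.mem_Iio, ht, and_true]
      split_ifs <;> simp
    rw [heq, integral_indicator measurableSet_Iio, integral_const_mul,
      ← integral_Iic_eq_integral_Iio, fact_Iic, Set.indicator_of_mem (Set.mem_Iic.mpr ht)]
    ring
  · have heq : (fun z => kneg ψ z t) = fun _ => 0 := by
      funext z
      simp only [kneg, Set.indicator, Set.mem_Ioc]
      have : ¬(z < t ∧ t ≤ 0) := fun h => ht h.2
      simp [this]
    rw [heq, Set.indicator_of_notMem (fun h => ht (Set.mem_Iic.mp h))]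
    simp

theorem stein_core (hψm : AEStronglyMeasurable ψ (volume : Measure ℝ))
    (hint : Integrable (fun t => ψ t * rho t)) :
    Integrable (fun z => (z * rho z) * ∫ t in (0:ℝ)..z, ψ t) volume ∧
      ∫ z, (z * rho z) * ∫ t in (0:ℝ)..z, ψ t = ∫ t, ψ t * rho t := by
  have hkp := integrable_kpos hψm hint
  have hkn := integrable_kneg hψm hint
  have hmp : Integrable (fun z => ∫ t, kpos ψ z t) volume := hkp.integral_prod_left
  have hmn : Integrable (fun z => ∫ t, kneg ψ z t) volume := hkn.integral_prod_left
  have key : ∀ z, (z * rho z) * ∫ t in (0:ℝ)..z, ψ t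
      = (∫ t, kpos ψ z t) - ∫ t, kneg ψ z t := by
    intro z
    rw [kpos_int_t, kneg_int_t]
    show (z * rho z) * ((∫ t in Set.Ioc 0 z, ψ t) - ∫ t in Set.Ioc z 0, ψ t) = _
    ring
  have hfun : (fun z => (z * rho z) * ∫ t in (0:ℝ)..z, ψ t)
      = fun z => (∫ t, kpos ψ z t) - ∫ t, kneg ψ z t := funext key
  constructor
  · rw [hfun]; exact hmp.sub hmn
  · rw [hfun, integral_sub hmp hmn]
    have hswap_p : ∫ z, ∫ t, kpos ψ z t = ∫ t, ∫ z, kpos ψ z t :=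
      integral_integral_swap hkp
    have hswap_n : ∫ z, ∫ t, kneg ψ z t = ∫ t, ∫ z, kneg ψ z t :=
      integral_integral_swap hkn
    rw [hswap_p, hswap_n]
    have hp : ∫ t, ∫ z, kpos ψ z t = ∫ t in Set.Ioi 0, ψ t * rho t := by
      rw [show (fun t => ∫ z, kpos ψ z t)
          = Set.indicator (Set.Ioi 0) (fun t => ψ t * rho t) from funext kpos_int_z]
      exact integral_indicator measurableSet_Ioi
    have hn : ∫ t, ∫ z, kneg ψ z t = -∫ t in Set.Iic 0, ψ t * rho t := by
      rw [show (fun t => ∫ z, kneg ψ z t)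
          = Set.indicator (Set.Iic 0) (fun t => -(ψ t * rho t)) from funext kneg_int_z]
      rw [integral_indicator measurableSet_Iic, integral_neg]
    rw [hp, hn, sub_neg_eq_add, add_comm, ← compl_Iic]
    exact integral_add_compl measurableSet_Iic hint

end CoreSwap

section Gaussian

noncomputable def cst : ℝ := (Real.sqrt (2 * Real.pi))⁻¹

lemma cst_pos : 0 < cst := by
  unfold cst
  exact inv_pos.mpr (Real.sqrt_pos.mpr (by positivity))

lemma pdf_eq (x : ℝ) : gaussianPDFReal 0 1 x = cst * rho x := by
  rw [gaussianPDFReal]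
  unfold cst rho
  norm_num

lemma gaussian_density : gaussianReal 0 1
    = (volume : Measure ℝ).withDensity (fun x => ENNReal.ofReal (cst * rho x)) := by
  rw [gaussianReal_of_var_ne_zero 0 one_ne_zero, gaussianPDF_def]
  congr 1
  funext x
  rw [pdf_eq]

lemma meas_pdf : Measurable (fun x => (cst * rho x).toNNReal) :=
  (rho_cont.measurable.const_mul cst).real_toNNReal

lemma integral_gaussian_eq (F : ℝ → ℝ) :
    ∫ x, F x ∂(gaussianReal 0 1) = ∫ x, (cst * rho x) * F x := by
  rw [gaussian_density]
  have h : (fun x => ENNReal.ofReal (cst * rho x))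
      = fun x => ((cst * rho x).toNNReal : ENNReal) := rfl
  rw [h, integral_withDensity_eq_integral_smul meas_pdf F]
  congr 1
  funext x
  rw [NNReal.smul_def, Real.coe_toNNReal _ (mul_nonneg cst_pos.le (rho_pos x).le), smul_eq_mul]

lemma integrable_gaussian_iff (F : ℝ → ℝ) :
    Integrable F (gaussianReal 0 1) ↔ Integrable (fun x => (cst * rho x) * F x) volume := by
  rw [gaussian_density]
  have h : (fun x => ENNReal.ofReal (cst * rho x))
      = fun x => ((cst * rho x).toNNReal : ENNReal) := rfl
  rw [h, integrable_withDensity_iff_integrable_smul meas_pdf]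
  refine integrable_congr (Eventually.of_forall fun x => ?_)
  show (cst * rho x).toNNReal • F x = cst * rho x * F x
  rw [NNReal.smul_def, Real.coe_toNNReal _ (mul_nonneg cst_pos.le (rho_pos x).le), smul_eq_mul]

end Gaussian

end SteinAux

open SteinAux

theorem stein_lemma_jointly_gaussian
    {Ω : Type*} [MeasureSpace Ω] [IsProbabilityMeasure (volume : Measure Ω)]
    (Z₁ Z₂ : Ω → ℝ) (hZ₁m : Measurable Z₁) (hZ₂m : Measurable Z₂)
    (hZ₁ : Measure.map Z₁ volume = gaussianReal 0 1)
    (hZ₂ : Measure.map Z₂ volume = gaussianReal 0 1)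
    (hindep : IndepFun Z₁ Z₂ volume)
    (m₁ m₂ a b σ : ℝ) (hσ : 0 < σ)
    (X₁ X₂ : Ω → ℝ)
    (hX₁ : ∀ ω, X₁ ω = m₁ + σ * Z₁ ω)
    (hX₂ : ∀ ω, X₂ ω = m₂ + a * Z₁ ω + b * Z₂ ω)
    (φ : ℝ → ℝ) (hφ : LocallyIntegrable φ volume)
    (g : ℝ → ℝ) (hg : ∀ x : ℝ, g x = g 0 + ∫ t in (0 : ℝ)..x, φ t)
    (hint₁ : Integrable (fun ω => g (X₁ ω)) volume)
    (hint₂ : Integrable (fun ω => g (X₁ ω) * X₂ ω) volume)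
    (hint₃ : Integrable (fun ω => φ (X₁ ω)) volume) :
    ∫ ω, g (X₁ ω) * (X₂ ω - m₂) = σ * a * ∫ ω, φ (X₁ ω) := by
  have hσ' : σ ≠ 0 := ne_of_gt hσ
  have hφae : AEStronglyMeasurable φ volume := hφ.aestronglyMeasurable
  have hφii : ∀ u v : ℝ, IntervalIntegrable φ volume u v := fun u v =>
    (hφ.integrableOn_isCompact isCompact_uIcc).intervalIntegrable
  have hgc : Continuous g := by
    have hgeq : g = fun x => g 0 + ∫ t in (0:ℝ)..x, φ t := funext hg
    rw [hgeq]
    exact continuous_const.add (intervalIntegral.continuous_primitive hφii 0)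
  -- the affine map z ↦ m₁ + σ z is quasi measure preserving
  have hA : Measure.QuasiMeasurePreserving (fun z : ℝ => m₁ + σ * z) volume volume := by
    have h1 : Measure.QuasiMeasurePreserving (fun z : ℝ => σ * z) volume volume := by
      refine ⟨measurable_id.const_mul σ, ?_⟩
      rw [Real.map_volume_mul_left hσ']
      exact Measure.smul_absolutelyContinuous
    have h2 : Measure.QuasiMeasurePreserving (fun y : ℝ => m₁ + y) volume volume :=
      (measurePreserving_add_left volume m₁).quasiMeasurePreserving
    exact h2.comp h1
  set γ : Measure ℝ := gaussianReal 0 1 with hγ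
  have hγac : γ ≪ volume := gaussianReal_absolutelyContinuous 0 one_ne_zero
  set Ψ : ℝ → ℝ := fun z => φ (m₁ + σ * z) with hΨ
  set G : ℝ → ℝ := fun z => g (m₁ + σ * z) with hG
  have hGc : Continuous G := hgc.comp (continuous_const.add (continuous_const.mul continuous_id))
  have hΨm : AEStronglyMeasurable Ψ volume := hφae.comp_quasiMeasurePreserving hA
  have hΨmγ : AEStronglyMeasurable Ψ γ := hΨm.mono_ac hγac
  -- transfer hint₃ to the real line
  have hcompΨ : (Ψ ∘ Z₁) = fun ω => φ (X₁ ω) := funext fun ω => by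
    simp only [Function.comp, hΨ, hX₁ ω]
  have hΨint_γ : Integrable Ψ γ := by
    rw [← hZ₁, integrable_map_measure (by rw [hZ₁]; exact hΨmγ) hZ₁m.aemeasurable, hcompΨ]
    exact hint₃
  have hΨρ : Integrable (fun t => Ψ t * rho t) volume := by
    have h1 : Integrable (fun x => (cst * rho x) * Ψ x) volume :=
      (integrable_gaussian_iff Ψ).mp hΨint_γ
    refine (h1.const_mul cst⁻¹).congr (Eventually.of_forall fun t => ?_)
    show cst⁻¹ * (cst * rho t * Ψ t) = Ψ t * rho t
    field_simp [ne_of_gt cst_pos]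
  -- apply the core lemma to ψ' = σ • Ψ
  set ψ' : ℝ → ℝ := fun t => σ * Ψ t with hψ'
  have hψ'm : AEStronglyMeasurable ψ' volume := hΨm.const_mul σ
  have hψ'ρ : Integrable (fun t => ψ' t * rho t) volume := by
    refine (hΨρ.const_mul σ).congr (Eventually.of_forall fun t => ?_)
    show σ * (Ψ t * rho t) = ψ' t * rho t
    rw [hψ']
    ring
  obtain ⟨hcoreInt, hcoreEq⟩ := stein_core hψ'm hψ'ρ
  -- H identity : ∫_0^z ψ' = G z - g m₁
  have hH : ∀ z : ℝ, (∫ t in (0:ℝ)..z, ψ' t) = G z - g m₁ := by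
    intro z
    have h1 : (∫ t in (0:ℝ)..z, ψ' t) = σ * ∫ t in (0:ℝ)..z, φ (m₁ + σ * t) := by
      rw [hψ']
      exact intervalIntegral.integral_const_mul σ _
    have h2 : (∫ t in (0:ℝ)..z, φ (m₁ + σ * t))
        = σ⁻¹ • ∫ x in (m₁ + σ * 0)..(m₁ + σ * z), φ x :=
      intervalIntegral.integral_comp_add_mul φ hσ' m₁
    have h3 : (∫ x in m₁..(m₁ + σ * z), φ x)
        = (∫ x in (0:ℝ)..(m₁ + σ * z), φ x) - ∫ x in (0:ℝ)..m₁, φ x :=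
      (intervalIntegral.integral_interval_sub_left (hφii 0 (m₁ + σ * z)) (hφii 0 m₁)).symm
    rw [h1, h2]
    rw [show m₁ + σ * 0 = m₁ by ring] at *
    rw [h3, hG]
    simp only []
    rw [hg (m₁ + σ * z), hg m₁, smul_eq_mul]
    field_simp
    ring
  -- integrability and value of ∫ z (z ρ z) G z
  have hGint : Integrable (fun z => (z * rho z) * G z) volume := by
    have heq : (fun z => (z * rho z) * G z)
        = fun z => (z * rho z) * (∫ t in (0:ℝ)..z, ψ' t) + g m₁ * (z * rho z) :=
      funext fun z => by rw [hH z]; ring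
    rw [heq]
    exact hcoreInt.add (integrable_mul_rho.const_mul (g m₁))
  have hGval : ∫ z, (z * rho z) * G z = σ * ∫ t, Ψ t * rho t := by
    have heq : (fun z => (z * rho z) * G z)
        = fun z => (z * rho z) * (∫ t in (0:ℝ)..z, ψ' t) + g m₁ * (z * rho z) :=
      funext fun z => by rw [hH z]; ring
    rw [heq, integral_add hcoreInt (integrable_mul_rho.const_mul (g m₁)),
      hcoreEq, integral_const_mul, fact_total, mul_zero, add_zero]
    have : (fun t => ψ' t * rho t) = fun t => σ * (Ψ t * rho t) :=
      funext fun t => by rw [hψ']; ring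
    rw [this, integral_const_mul]
  -- transfer to Ω : the term  g(X₁) Z₁
  have hGZaesm : AEStronglyMeasurable (fun z => G z * z) γ :=
    (hGc.mul continuous_id).aestronglyMeasurable
  have hGZint_γ : Integrable (fun z => G z * z) γ := by
    rw [integrable_gaussian_iff]
    refine (hGint.const_mul cst).congr (Eventually.of_forall fun z => ?_)
    show cst * ((z * rho z) * G z) = (cst * rho z) * (G z * z)
    ring
  have hcompGZ : ((fun z => G z * z) ∘ Z₁) = fun ω => g (X₁ ω) * Z₁ ω := funext fun ω => by
    simp only [Function.comp, hG, hX₁ ω]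
  have hGZint : Integrable (fun ω => g (X₁ ω) * Z₁ ω) volume := by
    rw [← hcompGZ, ← integrable_map_measure (by rw [hZ₁]; exact hGZaesm) hZ₁m.aemeasurable, hZ₁]
    exact hGZint_γ
  have hGZval : ∫ ω, g (X₁ ω) * Z₁ ω = cst * (σ * ∫ t, Ψ t * rho t) := by
    have h1 : ∫ z, G z * z ∂γ = ∫ ω, g (X₁ ω) * Z₁ ω := by
      rw [← hZ₁, integral_map hZ₁m.aemeasurable (by rw [hZ₁]; exact hGZaesm)]
      refine integral_congr_ae (Eventually.of_forall fun ω => ?_)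
      simp only [hG]
      rw [← hX₁ ω]
    rw [← h1, integral_gaussian_eq]
    rw [← hGval, ← integral_const_mul]
    refine integral_congr_ae (Eventually.of_forall fun z => ?_)
    show (cst * rho z) * (G z * z) = cst * ((z * rho z) * G z)
    ring
  -- value of ∫ φ(X₁)
  have hφX₁val : ∫ ω, φ (X₁ ω) = cst * ∫ t, Ψ t * rho t := by
    have h1 : ∫ z, Ψ z ∂γ = ∫ ω, φ (X₁ ω) := by
      rw [← hZ₁, integral_map hZ₁m.aemeasurable (by rw [hZ₁]; exact hΨmγ)]
      refine integral_congr_ae (Eventually.of_forall fun ω => ?_)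
      simp only [hΨ]
      rw [← hX₁ ω]
    rw [← h1, integral_gaussian_eq, ← integral_const_mul]
    refine integral_congr_ae (Eventually.of_forall fun z => ?_)
    show (cst * rho z) * Ψ z = cst * (Ψ z * rho z)
    ring
  -- Z₂ : integrability and zero mean
  have hidγ : Integrable (fun x : ℝ => x) γ := by
    rw [hγ, integrable_gaussian_iff]
    refine (integrable_mul_rho.const_mul cst).congr (Eventually.of_forall fun x => ?_)
    show cst * (x * rho x) = (cst * rho x) * x
    ring
  have hZ₂int : Integrable Z₂ volume := by
    have := (integrable_map_measure (f := Z₂) (g := fun x : ℝ => x)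
      (by rw [hZ₂]; exact aestronglyMeasurable_id) hZ₂m.aemeasurable).mp (by rw [hZ₂]; exact hidγ)
    exact this
  have hZ₂mean : ∫ ω, Z₂ ω = 0 := by
    have h1 : ∫ x, (fun x : ℝ => x) x ∂(Measure.map Z₂ volume) = ∫ ω, Z₂ ω :=
      integral_map hZ₂m.aemeasurable (by rw [hZ₂]; exact aestronglyMeasurable_id)
    rw [← h1, hZ₂, hγ, integral_gaussian_eq]
    have h2 : (fun x : ℝ => (cst * rho x) * x) = fun x => cst * (x * rho x) :=
      funext fun x => by ring
    rw [h2, integral_const_mul, fact_total, mul_zero]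
  -- independence of g(X₁) and Z₂
  have hGZ₁ : (fun ω => g (X₁ ω)) = G ∘ Z₁ := funext fun ω => by
    simp only [Function.comp, hG]
    rw [hX₁ ω]
  have hind2 : IndepFun (fun ω => g (X₁ ω)) Z₂ volume := by
    rw [hGZ₁]
    exact hindep.comp hGc.measurable measurable_id
  have hprod2int : Integrable (fun ω => g (X₁ ω) * Z₂ ω) volume :=
    hind2.integrable_mul hint₁ hZ₂int
  have hprod2val : ∫ ω, g (X₁ ω) * Z₂ ω = (∫ ω, g (X₁ ω)) * ∫ ω, Z₂ ω :=
    hind2.integral_fun_mul_eq_mul_integral hint₁.aestronglyMeasurable hZ₂int.aestronglyMeasurable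
  -- final assembly
  have hsplit : (fun ω => g (X₁ ω) * (X₂ ω - m₂))
      = fun ω => a * (g (X₁ ω) * Z₁ ω) + b * (g (X₁ ω) * Z₂ ω) := funext fun ω => by
    rw [hX₂ ω]
    ring
  calc ∫ ω, g (X₁ ω) * (X₂ ω - m₂)
      = ∫ ω, (a * (g (X₁ ω) * Z₁ ω) + b * (g (X₁ ω) * Z₂ ω)) := by rw [hsplit]
    _ = a * (∫ ω, g (X₁ ω) * Z₁ ω) + b * ∫ ω, g (X₁ ω) * Z₂ ω := by
        rw [integral_add (hGZint.const_mul a) (hprod2int.const_mul b),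
          integral_const_mul, integral_const_mul]
    _ = a * (cst * (σ * ∫ t, Ψ t * rho t)) + b * ((∫ ω, g (X₁ ω)) * 0) := by
        rw [hGZval, hprod2val, hZ₂mean]
    _ = σ * a * (cst * ∫ t, Ψ t * rho t) := by ring
    _ = σ * a * ∫ ω, φ (X₁ ω) := by rw [hφX₁val]
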